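/- Let a, b ∈ ℚ̄ with a ≠ 0. The following are equivalent: (i) there exists α ∈ ℚ̄ with h_{a,b}(α) = 0 (i.e., the minimum value of h_{a,b} is achieved and equals 0); (ii) b = 0, or b is a root of unity, or there exists a root of unity ζ such that aζ + b = 0 or aζ + b is a root of unity. Furthermore, if (i) holds and moreover b ≠ 0, b is not a root of unity, and |a| ≠ |b| (under a fixed embedding of ℚ̄ into ℂ), then | |a| − |b| | ≤ 1 and |a| + |b| ≥ 1. -/

import Mathlib

noncomputable section

/-- The field of algebraic numbers, `ℚ̄`. -/
abbrev Qbar : Type := AlgebraicClosure ℚ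

/-- `log⁺ x = max (log x) 0` (for `x ≥ 0`). -/
def logPlus (x : ℝ) : ℝ := Real.log (max 1 x)

/-- The absolute Weil height, via the Mahler-measure formula
`h(α) = (1/d) (log a_d + ∑_i log⁺ |α_i|)`, where `a_d` is the (positive) leading coefficient
of the primitive integer minimal polynomial of `α` and the `α_i` are the conjugates of `α`
in `ℂ`. -/
def weilHeight (α : Qbar) : ℝ :=
  ((minpoly ℚ α).natDegree : ℝ)⁻¹ *
    (Real.log (sInf {n : ℕ | 0 < n ∧ ∀ i, (((minpoly ℚ α).coeff i) * (n : ℚ)).den = 1} : ℕ) +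
     (((minpoly ℚ α).aroots ℂ).map (fun z => logPlus ‖z‖)).sum)

/-- The essential minimum of a real-valued function:
`μ^ess(f) = inf {θ : {α | f α ≤ θ} is infinite}`. -/
def essMin {X : Type} (f : X → ℝ) : ℝ :=
  sInf {θ : ℝ | {α : X | f α ≤ θ}.Infinite}

/-- The height `h_{a,b}(α) = h(α) + h(aα + b)`. -/
def hab (a b : Qbar) (α : Qbar) : ℝ := weilHeight α + weilHeight (a * α + b)

open Polynomial

lemma logPlus_nonneg (x : ℝ) : 0 ≤ logPlus x := Real.log_nonneg (le_max_left _ _)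

lemma logPlus_eq_zero {x : ℝ} (h : x ≤ 1) : logPlus x = 0 := by
  rw [logPlus, max_eq_left h, Real.log_one]

lemma absEqOneOfPow {z : ℂ} {n : ℕ} (hn : 0 < n) (h : z ^ n = 1) : ‖z‖ = 1 := by
  have habs : ‖z‖ ^ n = 1 := by rw [← norm_pow, h, norm_one]
  rcases lt_trichotomy (‖z‖) 1 with hlt | heq | hgt
  · exfalso
    have := pow_lt_one₀ (by positivity) hlt hn.ne'
    rw [habs] at this; exact lt_irrefl 1 this
  · exact heq
  · exfalso
    have := one_lt_pow₀ hgt hn.ne'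
    rw [habs] at this; exact lt_irrefl 1 this

def denS (p : ℚ[X]) : Set ℕ := {n : ℕ | 0 < n ∧ ∀ i, ((p.coeff i) * (n : ℚ)).den = 1}

lemma mul_den_den_eq_one (q : ℚ) {n : ℕ} (hd : q.den ∣ n) : (q * (n : ℚ)).den = 1 := by
  obtain ⟨c, rfl⟩ := hd
  have hden : ((q.den : ℚ)) ≠ 0 := by exact_mod_cast q.den_nz
  have hq : q * (q.den : ℚ) = (q.num : ℚ) := by
    nth_rewrite 1 [← Rat.num_div_den q]
    rw [div_mul_cancel₀ _ hden]
  have : q * ((q.den * c : ℕ) : ℚ) = ((q.num * c : ℤ) : ℚ) := by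
    push_cast
    rw [← mul_assoc, hq]
  rw [this, Rat.den_intCast]

lemma denS_nonempty (p : ℚ[X]) : (denS p).Nonempty := by
  refine ⟨∏ i ∈ p.support, (p.coeff i).den, ?_, ?_⟩
  · exact Finset.prod_pos fun i _ => (p.coeff i).pos
  · intro i
    by_cases hi : i ∈ p.support
    · exact mul_den_den_eq_one _ (Finset.dvd_prod_of_mem _ hi)
    · rw [notMem_support_iff.mp hi, zero_mul]
      rfl

lemma denS_sInf_pos (p : ℚ[X]) : 0 < sInf (denS p) :=
  (Nat.sInf_mem (denS_nonempty p)).1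

lemma weilHeight_nonneg (α : Qbar) : 0 ≤ weilHeight α := by
  apply mul_nonneg (by positivity)
  apply add_nonneg
  · apply Real.log_nonneg
    exact_mod_cast denS_sInf_pos (minpoly ℚ α)
  · apply Multiset.sum_nonneg
    intro t ht
    obtain ⟨z, _, rfl⟩ := Multiset.mem_map.mp ht
    exact logPlus_nonneg _

lemma weilHeight_eq_zero_of {x : Qbar} (hx : IsIntegral ℤ x)
    (h : ∀ z ∈ (minpoly ℚ x).aroots ℂ, ‖z‖ ≤ 1) : weilHeight x = 0 := by
  have hmap := minpoly.isIntegrallyClosed_eq_field_fractions' ℚ hx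
  have h1 : (1 : ℕ) ∈ denS (minpoly ℚ x) := by
    refine ⟨one_pos, fun i => ?_⟩
    rw [hmap, coeff_map]
    simp
  have hsinf : sInf (denS (minpoly ℚ x)) = 1 :=
    le_antisymm (Nat.sInf_le h1) (denS_sInf_pos _)
  show ((minpoly ℚ x).natDegree : ℝ)⁻¹ *
    (Real.log (sInf (denS (minpoly ℚ x)) : ℕ) + _) = 0
  rw [hsinf]
  have hsum : (((minpoly ℚ x).aroots ℂ).map (fun z => logPlus ‖z‖)).sum = 0 := by
    apply Multiset.sum_eq_zero
    intro t ht
    obtain ⟨z, hz, rfl⟩ := Multiset.mem_map.mp ht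
    exact logPlus_eq_zero (h z hz)
  rw [hsum]
  simp

lemma weilHeight_zero : weilHeight (0 : Qbar) = 0 := by
  apply weilHeight_eq_zero_of isIntegral_zero
  intro z hz
  have := (mem_aroots'.mp hz).2
  have hdvd := minpoly.dvd ℚ (0 : Qbar) (p := X) (by simp)
  obtain ⟨q, hq⟩ := hdvd
  have : (aeval z) (X : ℚ[X]) = 0 := by
    rw [hq, map_mul, (mem_aroots'.mp hz).2, zero_mul]
  simp only [aeval_X] at this
  simp [this]

lemma weilHeight_eq_zero_of_pow {x : Qbar} {n : ℕ} (hn : 0 < n) (h : x ^ n = 1) :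
    weilHeight x = 0 := by
  have hint : IsIntegral ℤ x := by
    refine ⟨X ^ n - C 1, monic_X_pow_sub_C 1 hn.ne', ?_⟩
    simp [h]
  apply weilHeight_eq_zero_of hint
  intro z hz
  have hdvd := minpoly.dvd ℚ x (p := X ^ n - C 1) (by simp [h])
  obtain ⟨q, hq⟩ := hdvd
  have hz0 : (aeval z) ((X : ℚ[X]) ^ n - C 1) = 0 := by
    rw [hq, map_mul, (mem_aroots'.mp hz).2, zero_mul]
  have hzn : z ^ n = 1 := by
    simpa [sub_eq_zero] using hz0
  exact (absEqOneOfPow hn hzn).le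
lemma multiset_prod_le_one {s : Multiset ℝ} (h0 : ∀ t ∈ s, 0 ≤ t) (h1 : ∀ t ∈ s, t ≤ 1) :
    s.prod ≤ 1 := by
  induction s using Multiset.induction_on with
  | empty => simp
  | cons a s ih =>
    rw [Multiset.prod_cons]
    have ha0 := h0 a (Multiset.mem_cons_self a s)
    have ha1 := h1 a (Multiset.mem_cons_self a s)
    have hs0 : ∀ t ∈ s, 0 ≤ t := fun t ht => h0 t (Multiset.mem_cons_of_mem ht)
    have hs1 : ∀ t ∈ s, t ≤ 1 := fun t ht => h1 t (Multiset.mem_cons_of_mem ht)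
    have := ih hs0 hs1
    have hsn : 0 ≤ s.prod := Multiset.prod_nonneg hs0
    nlinarith

lemma multiset_all_eq_one {s : Multiset ℝ} (h0 : ∀ t ∈ s, 0 ≤ t) (h1 : ∀ t ∈ s, t ≤ 1)
    (hp : 1 ≤ s.prod) : ∀ t ∈ s, t = 1 := by
  intro t ht
  have hprod : t * (s.erase t).prod = s.prod := by
    rw [← Multiset.prod_cons, Multiset.cons_erase ht]
  have he0 : ∀ u ∈ s.erase t, 0 ≤ u := fun u hu => h0 u (Multiset.mem_of_mem_erase hu)
  have he1 : ∀ u ∈ s.erase t, u ≤ 1 := fun u hu => h1 u (Multiset.mem_of_mem_erase hu)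
  have hle := multiset_prod_le_one he0 he1
  have hen := Multiset.prod_nonneg he0
  have ht0 := h0 t ht
  have ht1 := h1 t ht
  nlinarith

open IntermediateField in
lemma eq_zero_or_pow_of_weilHeight_eq_zero {x : Qbar} (h : weilHeight x = 0) :
    x = 0 ∨ ∃ n : ℕ, 0 < n ∧ x ^ n = 1 := by
  by_cases hx0 : x = 0
  · exact Or.inl hx0
  right
  have hint : IsIntegral ℚ x := ((AlgebraicClosure.isAlgebraic ℚ).isAlgebraic x).isIntegral
  set p := minpoly ℚ x with hp
  have hp0 : p ≠ 0 := minpoly.ne_zero hint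
  have hdpos : 0 < p.natDegree := minpoly.natDegree_pos hint
  -- split the height into the two nonneg parts
  have hA : 0 ≤ Real.log (sInf (denS p) : ℕ) := by
    apply Real.log_nonneg; exact_mod_cast denS_sInf_pos p
  have hB : 0 ≤ ((p.aroots ℂ).map (fun z => logPlus ‖z‖)).sum := by
    apply Multiset.sum_nonneg
    intro t ht
    obtain ⟨z, _, rfl⟩ := Multiset.mem_map.mp ht
    exact logPlus_nonneg _
  have hsum0 : Real.log (sInf (denS p) : ℕ) +
      ((p.aroots ℂ).map (fun z => logPlus ‖z‖)).sum = 0 := by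
    have hne : ((p.natDegree : ℝ))⁻¹ ≠ 0 := by positivity
    have := h
    rw [weilHeight] at this
    exact (mul_eq_zero.mp this).resolve_left hne
  have hA0 : Real.log (sInf (denS p) : ℕ) = 0 := by linarith
  have hB0 : ((p.aroots ℂ).map (fun z => logPlus ‖z‖)).sum = 0 := by linarith
  -- all coefficients are integers
  have hsinf1 : sInf (denS p) = 1 := by
    have hpos := denS_sInf_pos p
    rcases Real.log_eq_zero.mp hA0 with h' | h' | h'
    · exfalso; exact_mod_cast hpos.ne' (by exact_mod_cast h')
    · exact_mod_cast h'
    · exfalso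
      have : (0:ℝ) < (sInf (denS p) : ℕ) := by exact_mod_cast hpos
      linarith
  have hden : ∀ i, (p.coeff i).den = 1 := by
    intro i
    have := (Nat.sInf_mem (denS_nonempty p)).2 i
    rwa [hsinf1, Nat.cast_one, mul_one] at this
  -- all roots have absolute value ≤ 1
  have habs_le : ∀ z ∈ p.aroots ℂ, ‖z‖ ≤ 1 := by
    intro z hz
    have hmem : logPlus ‖z‖ ∈
        (p.aroots ℂ).map (fun z => logPlus ‖z‖) :=
      Multiset.mem_map.mpr ⟨z, hz, rfl⟩
    have hle : logPlus ‖z‖ ≤ 0 := by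
      rw [← hB0]
      apply Multiset.single_le_sum ?_ _ hmem
      intro t ht
      obtain ⟨w, _, rfl⟩ := Multiset.mem_map.mp ht
      exact logPlus_nonneg _
    have hzero : logPlus ‖z‖ = 0 := le_antisymm hle (logPlus_nonneg _)
    rw [logPlus] at hzero
    rcases Real.log_eq_zero.mp hzero with h' | h' | h'
    · exfalso; have : (1:ℝ) ≤ max 1 ‖z‖ := le_max_left _ _; linarith
    · exact max_eq_left_iff.mp h'
    · exfalso; have : (1:ℝ) ≤ max 1 ‖z‖ := le_max_left _ _; linarith
  -- x is an algebraic integer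
  have hlift : p ∈ Polynomial.lifts (Int.castRingHom ℚ) := by
    rw [lifts_iff_coeff_lifts]
    intro i
    exact ⟨(p.coeff i).num, Rat.coe_int_num_of_den_eq_one (hden i)⟩
  obtain ⟨q, hq, -, hqm⟩ :=
    lifts_and_degree_eq_and_monic hlift (minpoly.monic hint)
  have hxint : IsIntegral ℤ x := by
    refine ⟨q, hqm, ?_⟩
    have : aeval x (q.map (Int.castRingHom ℚ)) = 0 := by rw [hq]; exact minpoly.aeval ℚ x
    rwa [show (Int.castRingHom ℚ) = algebraMap ℤ ℚ from rfl, aeval_map_algebraMap] at this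
  -- the product of the absolute values of the roots is ≥ 1
  have hc0 : p.coeff 0 ≠ 0 := fun hc => hx0 ((minpoly.coeff_zero_eq_zero hint).mp hc)
  have habs_c0 : 1 ≤ |(p.coeff 0 : ℚ)| := by
    have hnum : ((p.coeff 0).num : ℚ) = p.coeff 0 := Rat.coe_int_num_of_den_eq_one (hden 0)
    have hnum0 : (p.coeff 0).num ≠ 0 := by
      intro h'
      apply hc0
      rw [← hnum, h', Int.cast_zero]
    have : (1 : ℤ) ≤ |(p.coeff 0).num| := Int.one_le_abs hnum0
    calc (1:ℚ) ≤ |((p.coeff 0).num : ℚ)| := by exact_mod_cast this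
    _ = |(p.coeff 0 : ℚ)| := by rw [hnum]
  -- product of roots
  have hP : (p.map (algebraMap ℚ ℂ)).Monic := (minpoly.monic hint).map _
  have hsplits : (p.map (algebraMap ℚ ℂ)).Splits :=
    IsAlgClosed.splits _
  have hprod := hsplits.coeff_zero_eq_prod_roots_of_monic hP
  have hprod_abs : 1 ≤ ((p.aroots ℂ).map (fun z : ℂ => ‖z‖)).prod := by
    have h1 : ‖(p.map (algebraMap ℚ ℂ)).coeff 0‖ = ((|p.coeff 0| : ℚ) : ℝ) := by
      rw [coeff_map]
      rw [show (algebraMap ℚ ℂ) (p.coeff 0) = (((p.coeff 0 : ℚ) : ℝ) : ℂ) by norm_cast]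
      rw [Complex.norm_real, Real.norm_eq_abs]
      norm_cast
    have h2 : ‖(p.map (algebraMap ℚ ℂ)).coeff 0‖
        = ((p.aroots ℂ).map (fun z : ℂ => ‖z‖)).prod := by
      rw [hprod, norm_mul, norm_pow, norm_neg, norm_one, one_pow, one_mul]
      rw [show ((p.map (algebraMap ℚ ℂ)).roots) = p.aroots ℂ from rfl]
      exact map_multiset_prod (normHom : ℂ →*₀ ℝ) _
    rw [h2] at h1
    rw [h1]
    exact_mod_cast habs_c0
  -- all roots have absolute value 1
  have habs_eq : ∀ z ∈ p.aroots ℂ, ‖z‖ = 1 := by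
    intro z hz
    have := multiset_all_eq_one (s := (p.aroots ℂ).map (fun z : ℂ => ‖z‖))
      (fun t ht => by obtain ⟨w, _, rfl⟩ := Multiset.mem_map.mp ht; exact norm_nonneg w)
      (fun t ht => by obtain ⟨w, hw, rfl⟩ := Multiset.mem_map.mp ht; exact habs_le w hw)
      hprod_abs
    exact this _ (Multiset.mem_map.mpr ⟨z, hz, rfl⟩)
  -- move to the number field ℚ⟮x⟯
  haveI : FiniteDimensional ℚ ℚ⟮x⟯ := IntermediateField.adjoin.finiteDimensional hint
  haveI : NumberField ℚ⟮x⟯ := ⟨⟩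
  set g := AdjoinSimple.gen ℚ x with hg
  have hgx : algebraMap ℚ⟮x⟯ Qbar g = x := AdjoinSimple.algebraMap_gen ℚ x
  have hgint : IsIntegral ℤ g := by
    rw [← isIntegral_algebraMap_iff (algebraMap ℚ⟮x⟯ Qbar).injective, hgx]
    exact hxint
  have hnorm : ∀ φ : ℚ⟮x⟯ →+* ℂ, ‖φ g‖ = 1 := by
    intro φ
    have haev : aeval (φ g) p = 0 := by
      have : aeval (φ.toRatAlgHom g) p = φ.toRatAlgHom (aeval g p) := aeval_algHom_apply _ _ _
      have hg0 : aeval g p = 0 := by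
        rw [hp, ← minpoly_gen ℚ x]
        exact minpoly.aeval ℚ g
      rw [hg0, map_zero] at this
      exact this
    have hmem : φ g ∈ p.aroots ℂ := mem_aroots.mpr ⟨hp0, haev⟩
    exact habs_eq _ hmem
  obtain ⟨n, hn, hgn⟩ := NumberField.Embeddings.pow_eq_one_of_norm_eq_one ℚ⟮x⟯ ℂ hgint hnorm
  refine ⟨n, hn, ?_⟩
  rw [← hgx, ← map_pow, hgn, map_one]
lemma hab_eq_zero_iff (a b α : Qbar) :
    hab a b α = 0 ↔ weilHeight α = 0 ∧ weilHeight (a * α + b) = 0 := by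
  have h1 := weilHeight_nonneg α
  have h2 := weilHeight_nonneg (a * α + b)
  unfold hab
  constructor
  · intro h; constructor <;> linarith
  · rintro ⟨h, h'⟩; rw [h, h', add_zero]

lemma weilHeight_eq_zero_iff (x : Qbar) :
    weilHeight x = 0 ↔ x = 0 ∨ ∃ n : ℕ, 0 < n ∧ x ^ n = 1 := by
  constructor
  · exact eq_zero_or_pow_of_weilHeight_eq_zero
  · rintro (rfl | ⟨n, hn, hx⟩)
    · exact weilHeight_zero
    · exact weilHeight_eq_zero_of_pow hn hx

/-- The minimum value of `h_{a,b}` is achieved and equals `0` iff `b = 0`, or `b` is a root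
of unity, or there is a root of unity `ζ` with `aζ + b = 0` or `aζ + b` a root of unity.
Furthermore, if this holds, `b ≠ 0`, `b` is not a root of unity and `|a| ≠ |b|` (via a fixed
embedding `j : ℚ̄ → ℂ`), then `||a| - |b|| ≤ 1` and `|a| + |b| ≥ 1`. -/
theorem hab_min_zero_iff (a b : Qbar) (ha : a ≠ 0) (j : Qbar →+* ℂ) :
    ((∃ α : Qbar, hab a b α = 0) ↔
      (b = 0 ∨ (∃ n : ℕ, 0 < n ∧ b ^ n = 1) ∨
        ∃ ζ : Qbar, (∃ n : ℕ, 0 < n ∧ ζ ^ n = 1) ∧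
          (a * ζ + b = 0 ∨ ∃ m : ℕ, 0 < m ∧ (a * ζ + b) ^ m = 1))) ∧
    ((∃ α : Qbar, hab a b α = 0) → b ≠ 0 → (¬ ∃ n : ℕ, 0 < n ∧ b ^ n = 1) →
      ‖j a‖ ≠ ‖j b‖ →
      |‖j a‖ - ‖j b‖| ≤ 1 ∧
        1 ≤ ‖j a‖ + ‖j b‖) := by
  have main : (∃ α : Qbar, hab a b α = 0) ↔
      (b = 0 ∨ (∃ n : ℕ, 0 < n ∧ b ^ n = 1) ∨
        ∃ ζ : Qbar, (∃ n : ℕ, 0 < n ∧ ζ ^ n = 1) ∧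
          (a * ζ + b = 0 ∨ ∃ m : ℕ, 0 < m ∧ (a * ζ + b) ^ m = 1)) := by
    constructor
    · rintro ⟨α, hα⟩
      obtain ⟨hα1, hα2⟩ := (hab_eq_zero_iff a b α).mp hα
      rcases (weilHeight_eq_zero_iff α).mp hα1 with rfl | hαru
      · rw [mul_zero, zero_add] at hα2
        rcases (weilHeight_eq_zero_iff b).mp hα2 with hb | hb
        · exact Or.inl hb
        · exact Or.inr (Or.inl hb)
      · exact Or.inr (Or.inr ⟨α, hαru, (weilHeight_eq_zero_iff _).mp hα2⟩)
    · rintro (rfl | hb | ⟨ζ, hζ, hcase⟩)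
      · refine ⟨0, (hab_eq_zero_iff _ _ _).mpr ⟨weilHeight_zero, ?_⟩⟩
        rw [mul_zero, zero_add]; exact weilHeight_zero
      · refine ⟨0, (hab_eq_zero_iff _ _ _).mpr ⟨weilHeight_zero, ?_⟩⟩
        rw [mul_zero, zero_add]
        exact (weilHeight_eq_zero_iff b).mpr (Or.inr hb)
      · refine ⟨ζ, (hab_eq_zero_iff _ _ _).mpr
          ⟨(weilHeight_eq_zero_iff ζ).mpr (Or.inr hζ), (weilHeight_eq_zero_iff _).mpr hcase⟩⟩
  refine ⟨main, ?_⟩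
  intro hex hb0 hbru hne
  rcases main.mp hex with rfl | hb | ⟨ζ, ⟨n, hn, hζn⟩, hcase⟩
  · exact absurd rfl hb0
  · exact absurd hb hbru
  have hζabs : ‖j ζ‖ = 1 :=
    absEqOneOfPow hn (by rw [← map_pow, hζn, map_one])
  rcases hcase with hz | ⟨m, hm, hms⟩
  · exfalso
    apply hne
    have : a * ζ = -b := by linear_combination hz
    have hj : j a * j ζ = -(j b) := by rw [← map_mul, this, map_neg]
    have := congrArg (fun z : ℂ => ‖z‖) hj
    rw [norm_mul, hζabs, mul_one, norm_neg] at this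
    exact this
  · have hcabs : ‖j (a * ζ + b)‖ = 1 :=
      absEqOneOfPow hm (by rw [← map_pow, hms, map_one])
    have hjsum : j a * j ζ + j b = j (a * ζ + b) := by rw [map_add, map_mul]
    constructor
    · have key := abs_norm_sub_norm_le (j a * j ζ) (-(j b))
      rw [sub_neg_eq_add, hjsum, hcabs, norm_mul, hζabs, mul_one, norm_neg] at key
      exact key
    · have key := norm_add_le (j a * j ζ) (j b)
      rw [hjsum, hcabs, norm_mul, hζabs, mul_one] at key
      exact key

end
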